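/- Let W be a nonempty finite set of edges of G and, for x in the completion Ḡ, let U_W(x) be the set of points y ∈ Ḡ that can be connected to x by a path containing no edge of W. Then U_W(x) is both open and closed in Ḡ. -/

import Mathlib

open UniformSpace Filter Topology
open scoped ENNReal

noncomputable section

/-- A locally finite edge-weighted (resistance) graph. -/
structure WGraph (V : Type*) where
  Adj : V → V → Prop
  symm : ∀ u v, Adj u v → Adj v u
  loopless : ∀ v, ¬ Adj v v
  R : V → V → ℝ
  Rsymm : ∀ u v, R u v = R v u
  Rpos : ∀ u v, Adj u v → 0 < R u v
  locFin : ∀ v, {u | Adj u v}.Finite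

namespace WGraph

variable {V : Type*} (G : WGraph V)

/-- The set of edges, as unordered pairs of vertices. -/
def edgeSet : Set (Sym2 V) := {e | ∃ u v, G.Adj u v ∧ e = s(u, v)}

/-- The set of total lengths of finite paths joining `u` to `v`. -/
def pathLengths (u v : V) : Set ℝ :=
  {L | ∃ (n : ℕ) (p : ℕ → V), p 0 = u ∧ p n = v ∧
        (∀ k < n, G.Adj (p k) (p (k + 1))) ∧
        L = ∑ k ∈ Finset.range n, G.R (p k) (p (k + 1))}

/-- `G` is connected: any two vertices are joined by a finite path. -/
def Connected : Prop := ∀ u v : V, (G.pathLengths u v).Nonempty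

/-- The metric on the vertex set is the minimal resistance path metric of `G`. -/
def IsPathMetric [MetricSpace V] : Prop :=
  ∀ u v : V, dist u v = sInf (G.pathLengths u v)

/-- Eventually flat functions: the values differ across only finitely many edges. -/
def EventuallyFlat (φ : V → ℝ) : Prop :=
  {p : V × V | G.Adj p.1 p.2 ∧ φ p.1 ≠ φ p.2}.Finite

open Classical in
/-- The conductance: the reciprocal resistance on edges, `0` off edges. -/
def cond (u v : V) : ℝ := if G.Adj u v then (G.R u v)⁻¹ else 0

/-- `f` is harmonic at `v`: its value is the conductance-weighted average of the
values at the adjacent vertices. -/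
def HarmonicAt (f : V → ℝ) (v : V) : Prop :=
  f v = (∑ u ∈ (G.locFin v).toFinset, G.cond u v)⁻¹ *
          ∑ u ∈ (G.locFin v).toFinset, G.cond u v * f u

/-- The weighted `ℓ²(μ)` inner product. -/
def winner (μ : V → ℝ) (f g : V → ℝ) : ℝ := ∑' v, f v * g v * μ v

/-- The bilinear (energy) form associated to conductances `C`. -/
def Bform (C : V → V → ℝ) (f g : V → ℝ) : ℝ :=
  (1 / 2) * ∑' p : V × V, C p.1 p.2 * (f p.1 - f p.2) * (g p.1 - g p.2)

/-- The formal Laplacian `Δ_μ`. -/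
def lap (C : V → V → ℝ) (μ : V → ℝ) (f : V → ℝ) (v : V) : ℝ :=
  (1 / μ v) * ∑' u, C u v * (f v - f u)

/-- The (possibly infinite) energy of `f`. -/
def energy (C : V → V → ℝ) (f : V → ℝ) : ℝ≥0∞ :=
  (1 / 2) * ∑' p : V × V, ENNReal.ofReal (C p.1 p.2 * (f p.1 - f p.2) ^ 2)

variable [MetricSpace V]

/-- A path in the completion `Ḡ` joining `x` and `y`: a two-sided sequence of
vertices (stationary steps are allowed, so this encodes finite paths, rays and
double rays) converging to `x` and `y` at its two ends. -/
structure CPath (x y : Completion V) where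
  p : ℤ → V
  step : ∀ k, p k = p (k + 1) ∨ G.Adj (p k) (p (k + 1))
  tendsto_left : Tendsto (fun n : ℕ => ((p (-(n : ℤ)) : V) : Completion V)) atTop (nhds x)
  tendsto_right : Tendsto (fun n : ℕ => ((p (n : ℤ) : V) : Completion V)) atTop (nhds y)

end WGraph

/-- The path `γ` uses (contains) the edge `e`. -/
def WGraph.CPath.uses {V : Type*} [MetricSpace V] {G : WGraph V}
    {x y : Completion V} (γ : G.CPath x y) (e : Sym2 V) : Prop :=
  ∃ k : ℤ, γ.p k ≠ γ.p (k + 1) ∧ e = s(γ.p k, γ.p (k + 1))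

namespace WGraph

variable {V : Type*} (G : WGraph V) [MetricSpace V]

/-- The completion `Ḡ` is weakly connected: any two distinct points admit a
finite set of edges met by every path joining them. -/
def WeaklyConnected : Prop :=
  ∀ x y : Completion V, x ≠ y →
    ∃ W : Set (Sym2 V), W.Finite ∧ W ⊆ G.edgeSet ∧
      ∀ γ : G.CPath x y, ∃ e ∈ W, γ.uses e

end WGraph



section AuxForUW

open UniformSpace Filter Topology

variable {V : Type*} [MetricSpace V] {G : WGraph V}

lemma pathLengths_nonneg {u v : V} {L : ℝ} (hL : L ∈ G.pathLengths u v) : 0 ≤ L := by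
  obtain ⟨n, p, h0, hn, hadj, rfl⟩ := hL
  exact Finset.sum_nonneg fun k hk =>
    le_of_lt (G.Rpos _ _ (hadj k (Finset.mem_range.mp hk)))

lemma bddBelow_pathLengths (G : WGraph V) (u v : V) : BddBelow (G.pathLengths u v) :=
  ⟨0, fun _ hL => pathLengths_nonneg hL⟩

/-- From `dist u v < c` extract an explicit path of length `< c`. -/
lemma exists_short_path (hmet : G.IsPathMetric) (hconn : G.Connected)
    {u v : V} {c : ℝ} (h : dist u v < c) :
    ∃ (n : ℕ) (p : ℕ → V), p 0 = u ∧ p n = v ∧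
      (∀ k < n, G.Adj (p k) (p (k + 1))) ∧
      ∑ k ∈ Finset.range n, G.R (p k) (p (k + 1)) < c := by
  have h' : sInf (G.pathLengths u v) < c := by rw [← hmet]; exact h
  obtain ⟨L, hL, hLc⟩ := (csInf_lt_iff (bddBelow_pathLengths G u v) (hconn u v)).mp h'
  obtain ⟨n, p, h0, hn, ha, rfl⟩ := hL
  exact ⟨n, p, h0, hn, ha, hLc⟩

/-- Any vertex on a path is within the path's total length of the start. -/
lemma dist_start_le (hmet : G.IsPathMetric) {n : ℕ} {p : ℕ → V}
    (hadj : ∀ k < n, G.Adj (p k) (p (k + 1))) {j : ℕ} (hj : j ≤ n) :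
    dist (p 0) (p j) ≤ ∑ k ∈ Finset.range n, G.R (p k) (p (k + 1)) := by
  have hmem : (∑ k ∈ Finset.range j, G.R (p k) (p (k + 1))) ∈ G.pathLengths (p 0) (p j) :=
    ⟨j, p, rfl, rfl, fun k hk => hadj k (hk.trans_le hj), rfl⟩
  calc dist (p 0) (p j) ≤ ∑ k ∈ Finset.range j, G.R (p k) (p (k + 1)) := by
        rw [hmet]; exact csInf_le (bddBelow_pathLengths G _ _) hmem
    _ ≤ ∑ k ∈ Finset.range n, G.R (p k) (p (k + 1)) :=
        Finset.sum_le_sum_of_subset_of_nonneg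
          (Finset.range_subset_range.mpr hj)
          (fun i hi _ => le_of_lt (G.Rpos _ _ (hadj i (Finset.mem_range.mp hi))))

/-- A path of total length `< r` uses no edge of `W`. -/
lemma short_path_avoids {W : Set (Sym2 V)} {r : ℝ}
    (hW : ∀ u v, G.Adj u v → s(u, v) ∈ W → r ≤ G.R u v)
    {n : ℕ} {p : ℕ → V} (hadj : ∀ k < n, G.Adj (p k) (p (k + 1)))
    (hsum : ∑ k ∈ Finset.range n, G.R (p k) (p (k + 1)) < r)
    {k : ℕ} (hk : k < n) : s(p k, p (k + 1)) ∉ W := by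
  intro hmem
  have h1 : r ≤ G.R (p k) (p (k + 1)) := hW _ _ (hadj k hk) hmem
  have h2 : G.R (p k) (p (k + 1)) ≤ ∑ i ∈ Finset.range n, G.R (p i) (p (i + 1)) :=
    Finset.single_le_sum
      (fun i hi => le_of_lt (G.Rpos _ _ (hadj i (Finset.mem_range.mp hi))))
      (Finset.mem_range.mpr hk)
  linarith

/-- The key construction: from any vertex `a` within distance `r` of a point `z` of the
completion, there is a one-sided infinite walk starting at `a`, avoiding `W`, and
converging to `z`. -/
lemma exists_ray (hmet : G.IsPathMetric) (hconn : G.Connected)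
    {W : Set (Sym2 V)} {r : ℝ} (hr : 0 < r)
    (hW : ∀ u v, G.Adj u v → s(u, v) ∈ W → r ≤ G.R u v)
    (z : Completion V) (a : V) (hd : dist ((a : V) : Completion V) z < r) :
    ∃ q : ℕ → V, q 0 = a ∧
      (∀ k, q k = q (k + 1) ∨ (G.Adj (q k) (q (k + 1)) ∧ s(q k, q (k + 1)) ∉ W)) ∧
      Tendsto (fun n : ℕ => ((q n : V) : Completion V)) atTop (nhds z) := by
  classical
  have hden := Metric.denseRange_iff.mp (Completion.denseRange_coe (α := V))
  have hdz : 0 < r - dist ((a : V) : Completion V) z := by linarith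
  -- choose approximating vertices
  have hw : ∀ n : ℕ, ∃ w : V, dist z ((w : V) : Completion V) <
      min ((r - dist ((a : V) : Completion V) z) / 2) (r * (2⁻¹ : ℝ) ^ (n + 1) / 8) := by
    intro n
    refine hden z _ (lt_min (by linarith) ?_)
    positivity
  choose w hwspec using hw
  set v : ℕ → V := fun n => Nat.casesOn n a w with hvdef
  have hv0 : v 0 = a := rfl
  have hpowpos : ∀ n : ℕ, (0:ℝ) < r * (2⁻¹ : ℝ) ^ n := fun n => by positivity
  have hvz : ∀ n, dist ((v n : V) : Completion V) z < r * (2⁻¹ : ℝ) ^ n := by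
    intro n
    cases n with
    | zero => simpa [hv0] using hd
    | succ m =>
        have h1 := hwspec m
        have h2 : dist ((v (m+1) : V) : Completion V) z = dist z ((w m : V) : Completion V) :=
          dist_comm _ _
        have h3 := min_le_right ((r - dist ((a : V) : Completion V) z) / 2)
          (r * (2⁻¹ : ℝ) ^ (m + 1) / 8)
        have h4 := hpowpos (m + 1)
        rw [h2]
        calc dist z ((w m : V) : Completion V) < _ := h1
          _ ≤ r * (2⁻¹ : ℝ) ^ (m + 1) / 8 := h3
          _ < r * (2⁻¹ : ℝ) ^ (m + 1) := by linarith
  have hvv : ∀ n, dist (v n) (v (n + 1)) < r * (2⁻¹ : ℝ) ^ n := by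
    intro n
    rw [← Completion.dist_eq]
    have htri : dist ((v n : V) : Completion V) ((v (n+1) : V) : Completion V) ≤
        dist ((v n : V) : Completion V) z + dist z ((v (n+1) : V) : Completion V) :=
      dist_triangle _ _ _
    cases n with
    | zero =>
        have h1 := hwspec 0
        have h2 := min_le_left ((r - dist ((a : V) : Completion V) z) / 2)
          (r * (2⁻¹ : ℝ) ^ (0 + 1) / 8)
        have h3 : dist z ((w 0 : V) : Completion V) <
            (r - dist ((a : V) : Completion V) z) / 2 := lt_of_lt_of_le h1 h2
        have h4 : dist ((v 0 : V) : Completion V) z = dist ((a : V) : Completion V) z := rfl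
        have h5 : ((v (0 + 1) : V) : Completion V) = ((w 0 : V) : Completion V) := rfl
        rw [h5] at htri
        rw [h4] at htri
        have : r * (2⁻¹ : ℝ) ^ 0 = r := by norm_num
        rw [this]
        linarith
    | succ m =>
        have h1 := hwspec m
        have h1' : dist z ((w m : V) : Completion V) < r * (2⁻¹ : ℝ) ^ (m + 1) / 8 :=
          lt_of_lt_of_le h1 (min_le_right _ _)
        have h2 := hwspec (m + 1)
        have h2' : dist z ((w (m+1) : V) : Completion V) < r * (2⁻¹ : ℝ) ^ (m + 2) / 8 :=
          lt_of_lt_of_le h2 (min_le_right _ _)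
        have h3 : dist ((v (m+1) : V) : Completion V) z = dist z ((w m : V) : Completion V) :=
          dist_comm _ _
        have h4 : ((v (m + 1 + 1) : V) : Completion V) = ((w (m+1) : V) : Completion V) := rfl
        rw [h4] at htri; rw [h3] at htri
        have h5 : r * (2⁻¹ : ℝ) ^ (m + 2) = r * (2⁻¹ : ℝ) ^ (m + 1) * 2⁻¹ := by ring
        have h6 := hpowpos (m + 1)
        rw [h5] at h2'
        linarith
  -- choose connecting paths
  have hpath : ∀ n, ∃ (m : ℕ) (p : ℕ → V), p 0 = v n ∧ p m = v (n + 1) ∧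
      (∀ k < m, G.Adj (p k) (p (k + 1))) ∧
      ∑ k ∈ Finset.range m, G.R (p k) (p (k + 1)) < r * (2⁻¹ : ℝ) ^ n :=
    fun n => exists_short_path hmet hconn (hvv n)
  choose L P hP0 hPL hPadj hPsum using hpath
  have hsum_lt_r : ∀ n, ∑ k ∈ Finset.range (L n), G.R (P n k) (P n (k + 1)) < r := by
    intro n
    have h1 : (2⁻¹ : ℝ) ^ n ≤ 1 := pow_le_one₀ (by norm_num) (by norm_num)
    have : r * (2⁻¹ : ℝ) ^ n ≤ r := by nlinarith
    exact lt_of_lt_of_le (hPsum n) this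
  -- block starting times
  set T : ℕ → ℕ := fun n => ∑ k ∈ Finset.range n, (L k + 1) with hTdef
  have hTsucc : ∀ n, T (n + 1) = T n + (L n + 1) := fun n => Finset.sum_range_succ _ n
  have hTmono : ∀ {m n : ℕ}, m ≤ n → T m ≤ T n := fun {m n} h =>
    Finset.sum_le_sum_of_subset (Finset.range_subset_range.mpr h)
  have hTn : ∀ n, n ≤ T n := by
    intro n
    calc n = ∑ _k ∈ Finset.range n, 1 := by simp
      _ ≤ T n := Finset.sum_le_sum fun i _ => by omega
  set idx : ℕ → ℕ := fun m => Nat.findGreatest (fun n => T n ≤ m) m with hidxdef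
  have hT0 : T 0 = 0 := by simp [hTdef]
  have hidx1 : ∀ m, T (idx m) ≤ m := by
    intro m
    rw [hidxdef]
    exact Nat.findGreatest_spec (P := fun n => T n ≤ m) (Nat.zero_le m) (by omega)
  have hidx2 : ∀ m, m < T (idx m + 1) := by
    intro m
    by_contra h
    push_neg at h
    have h1 : idx m + 1 ≤ m := le_trans (hTn _) h
    have h2 : idx m + 1 ≤ idx m := by
      conv_rhs => rw [hidxdef]
      exact Nat.le_findGreatest (P := fun n => T n ≤ m) h1 h
    omega
  have hidx_eq : ∀ m n, T n ≤ m → m < T (n + 1) → idx m = n := by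
    intro m n h1 h2
    have h3 : n ≤ idx m := by
      rw [hidxdef]
      exact Nat.le_findGreatest (P := fun n => T n ≤ m) (le_trans (hTn n) h1) h1
    have h4 : idx m ≤ n := by
      by_contra h
      push_neg at h
      have := hTmono (show n + 1 ≤ idx m by omega)
      have := hidx1 m
      omega
    omega
  set q : ℕ → V := fun m => P (idx m) (m - T (idx m)) with hqdef
  have hoffset : ∀ m, m - T (idx m) ≤ L (idx m) := by
    intro m
    have h1 := hidx1 m
    have h2 := hidx2 m
    have h3 := hTsucc (idx m)
    omega
  have hidx0 : idx 0 = 0 := by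
    apply hidx_eq 0 0 (by omega)
    have := hTsucc 0
    omega
  have hq0 : q 0 = a := by
    rw [hqdef]
    simp only [hidx0]
    rw [hT0]
    simpa using (hP0 0).trans hv0
  refine ⟨q, hq0, ?_, ?_⟩
  · -- step property
    intro m
    set n := idx m with hn
    have h1 : T n ≤ m := hidx1 m
    have h2 : m < T (n + 1) := hidx2 m
    have h3 := hTsucc n
    rcases lt_or_eq_of_le (Nat.succ_le_of_lt h2) with hlt | heq
    · -- same block
      have hidxm1 : idx (m + 1) = n := hidx_eq (m + 1) n (by omega) hlt
      have hj : m - T n < L n := by omega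
      have hq1 : q m = P n (m - T n) := by simp only [hqdef, hn]
      have hq2 : q (m + 1) = P n ((m - T n) + 1) := by
        simp only [hqdef, hidxm1]
        congr 1
        omega
      rw [hq1, hq2]
      exact Or.inr ⟨hPadj n _ hj, short_path_avoids hW (hPadj n) (hsum_lt_r n) hj⟩
    · -- block boundary
      have hm1 : m + 1 = T (n + 1) := heq
      have hidxm1 : idx (m + 1) = n + 1 := by
        apply hidx_eq (m + 1) (n + 1) (le_of_eq hm1.symm)
        have := hTsucc (n + 1)
        omega
      have hq1 : q m = P n (L n) := by
        simp only [hqdef, ← hn]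
        congr 1
        omega
      have hq2 : q (m + 1) = P (n + 1) 0 := by
        simp only [hqdef, hidxm1]
        congr 1
        omega
      left
      rw [hq1, hq2, hPL n, hP0 (n + 1)]
  · -- convergence
    rw [Metric.tendsto_atTop]
    intro ε hε
    obtain ⟨K, hK⟩ : ∃ K : ℕ, (2⁻¹ : ℝ) ^ K < ε / (2 * r) :=
      exists_pow_lt_of_lt_one (by positivity) (by norm_num)
    refine ⟨T K, fun m hm => ?_⟩
    have hKm : K ≤ idx m := by
      rw [hidxdef]
      exact Nat.le_findGreatest (P := fun n => T n ≤ m) (le_trans (hTn K) hm) hm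
    set n := idx m with hn
    have hqm : q m = P n (m - T n) := rfl
    have hd1 : dist (q m) (v n) ≤ ∑ k ∈ Finset.range (L n), G.R (P n k) (P n (k + 1)) := by
      rw [hqm, dist_comm, ← hP0 n]
      exact dist_start_le hmet (hPadj n) (hoffset m)
    have hd1' : dist ((q m : V) : Completion V) ((v n : V) : Completion V) <
        r * (2⁻¹ : ℝ) ^ n := by
      rw [Completion.dist_eq]
      exact lt_of_le_of_lt hd1 (hPsum n)
    have hd2 := hvz n
    have htri : dist ((q m : V) : Completion V) z ≤
        dist ((q m : V) : Completion V) ((v n : V) : Completion V) +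
        dist ((v n : V) : Completion V) z := dist_triangle _ _ _
    have hpow : r * (2⁻¹ : ℝ) ^ n ≤ r * (2⁻¹ : ℝ) ^ K := by
      have := pow_le_pow_of_le_one (a := (2⁻¹ : ℝ)) (by norm_num) (by norm_num) hKm
      nlinarith
    have hfin : 2 * (r * (2⁻¹ : ℝ) ^ K) < ε := by
      have hr2 : (0:ℝ) < 2 * r := by linarith
      calc 2 * (r * (2⁻¹ : ℝ) ^ K) = (2 * r) * (2⁻¹ : ℝ) ^ K := by ring
        _ < (2 * r) * (ε / (2 * r)) := by
            exact mul_lt_mul_of_pos_left hK hr2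
        _ = ε := by field_simp
    linarith

end AuxForUW

/-- for a nonempty finite edge set `W` and `x` in the completion,
the set `U_W(x)` of points joined to `x` by some path avoiding `W` is clopen. -/
theorem UW_isClopen {V : Type*} [MetricSpace V] [Countable V]
    (G : WGraph V) (hmet : G.IsPathMetric) (hconn : G.Connected)
    (W : Set (Sym2 V)) (hWfin : W.Finite) (hWsub : W ⊆ G.edgeSet)
    (hWne : W.Nonempty) (x : UniformSpace.Completion V) :
    IsClopen {y : UniformSpace.Completion V |
      y = x ∨ ∃ γ : G.CPath x y, ∀ e ∈ W, ¬ γ.uses e} := by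

  classical
  obtain ⟨e₀, he₀⟩ := hWne
  have hne : hWfin.toFinset.Nonempty := ⟨e₀, hWfin.mem_toFinset.mpr he₀⟩
  set Rv : Sym2 V → ℝ := Sym2.lift ⟨G.R, G.Rsymm⟩ with hRvdef
  set r : ℝ := hWfin.toFinset.inf' hne Rv with hrdef
  have hr0 : 0 < r := by
    rw [hrdef, Finset.lt_inf'_iff]
    intro e he
    obtain ⟨u, v, huv, rfl⟩ := hWsub (hWfin.mem_toFinset.mp he)
    simpa [hRvdef] using G.Rpos u v huv
  have hWr : ∀ u v, G.Adj u v → s(u, v) ∈ W → r ≤ G.R u v := by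
    intro u v huv hmem
    have h := Finset.inf'_le (s := hWfin.toFinset) Rv (hWfin.mem_toFinset.mpr hmem)
    exact h
  set U := {y : UniformSpace.Completion V |
      y = x ∨ ∃ γ : G.CPath x y, ∀ e ∈ W, ¬ γ.uses e} with hUdef
  have key : ∀ y ∈ U, ∀ z, dist y z < r → z ∈ U := by
    intro y hy z hyz
    rcases hy with rfl | ⟨γ, hγ⟩
    · -- y = x : build a two-sided ray through a vertex near x
      have hdz : dist y z < r := hyz
      have hpos : 0 < r - dist y z := by linarith
      obtain ⟨a, ha⟩ := Metric.denseRange_iff.mp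
        (UniformSpace.Completion.denseRange_coe (α := V)) y (r - dist y z) hpos
      have hax : dist ((a : V) : UniformSpace.Completion V) y < r := by
        rw [dist_comm]
        have := dist_nonneg (x := y) (y := z)
        linarith
      have haz : dist ((a : V) : UniformSpace.Completion V) z < r := by
        have htri := dist_triangle ((a : V) : UniformSpace.Completion V) y z
        rw [dist_comm] at ha
        linarith
      obtain ⟨qL, hqL0, hqLstep, hqLt⟩ := exists_ray hmet hconn hr0 hWr y a hax
      obtain ⟨qR, hqR0, hqRstep, hqRt⟩ := exists_ray hmet hconn hr0 hWr z a haz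
      set p : ℤ → V := fun k => if k ≤ 0 then qL (-k).toNat else qR k.toNat with hpdef
      have hstrong : ∀ k : ℤ, p k = p (k + 1) ∨
          (G.Adj (p k) (p (k + 1)) ∧ s(p k, p (k + 1)) ∉ W) := by
        intro k
        rcases lt_trichotomy k 0 with hk | hk | hk
        · have h1 : p k = qL (-k).toNat := if_pos (by omega)
          have h2 : p (k + 1) = qL (-(k + 1)).toNat := if_pos (by omega)
          set m := (-(k + 1)).toNat with hmdef
          have hm : (-k).toNat = m + 1 := by omega
          rw [h1, h2, hm]
          rcases hqLstep m with h | ⟨hadj, hnW⟩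
          · exact Or.inl h.symm
          · refine Or.inr ⟨G.symm _ _ hadj, ?_⟩
            rwa [Sym2.eq_swap]
        · subst hk
          have h1 : p 0 = qL 0 := if_pos le_rfl
          have h2 : p (0 + 1) = qR 1 := by
            rw [hpdef]
            norm_num
          rw [h1, h2, hqL0, ← hqR0]
          exact hqRstep 0
        · have h1 : p k = qR k.toNat := if_neg (by omega)
          have h2 : p (k + 1) = qR (k.toNat + 1) := by
            have : p (k + 1) = qR (k + 1).toNat := if_neg (by omega)
            rw [this]
            congr 1
            omega
          rw [h1, h2]
          exact hqRstep k.toNat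
      refine Or.inr ⟨⟨p, fun k => (hstrong k).imp id And.left, ?_, ?_⟩, ?_⟩
      · have heq : ∀ n : ℕ, ((qL n : V) : UniformSpace.Completion V) =
            ((p (-(n : ℤ)) : V) : UniformSpace.Completion V) := by
          intro n
          congr 1
          have h1 : p (-(n : ℤ)) = qL (-(-(n : ℤ))).toNat := if_pos (by omega)
          rw [h1]
          congr 1
          omega
        exact hqLt.congr heq
      · have heq : ∀ n : ℕ, ((qR n : V) : UniformSpace.Completion V) =
            ((p (n : ℤ) : V) : UniformSpace.Completion V) := by
          intro n
          congr 1
          rcases Nat.eq_zero_or_pos n with rfl | hn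
          · have h1 : p 0 = qL 0 := if_pos le_rfl
            rw [show ((0:ℕ):ℤ) = 0 by norm_num, h1, hqL0, hqR0]
          · have h1 : p (n : ℤ) = qR ((n : ℤ)).toNat := if_neg (by omega)
            rw [h1]
            simp
        exact hqRt.congr heq
      · rintro e he ⟨k, hne', heq⟩
        rcases hstrong k with h | ⟨_, hnW⟩
        · exact hne' h
        · exact hnW (heq ▸ he)
    · -- a path γ : x → y exists; splice on a ray towards z
      have hpos : 0 < r - dist y z := by linarith
      obtain ⟨N, hN⟩ := (Metric.tendsto_atTop.mp γ.tendsto_right) (r - dist y z) hpos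
      have ha : dist ((γ.p (N : ℤ) : V) : UniformSpace.Completion V) z < r := by
        have h1 := hN N le_rfl
        have htri := dist_triangle ((γ.p (N : ℤ) : V) : UniformSpace.Completion V) y z
        linarith
      obtain ⟨q, hq0, hqstep, hqt⟩ := exists_ray hmet hconn hr0 hWr z (γ.p (N : ℤ)) ha
      set p : ℤ → V := fun k => if k ≤ (N : ℤ) then γ.p k else q (k - (N : ℤ)).toNat
        with hpdef
      have hstep : ∀ k : ℤ, p k = p (k + 1) ∨ G.Adj (p k) (p (k + 1)) := by
        intro k
        rcases lt_trichotomy k (N : ℤ) with hk | hk | hk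
        · have h1 : p k = γ.p k := if_pos (by omega)
          have h2 : p (k + 1) = γ.p (k + 1) := if_pos (by omega)
          rw [h1, h2]
          exact γ.step k
        · subst hk
          have h1 : p (N : ℤ) = γ.p (N : ℤ) := if_pos le_rfl
          have h2 : p ((N : ℤ) + 1) = q 1 := by
            have h3 : p ((N : ℤ) + 1) = q ((N : ℤ) + 1 - (N : ℤ)).toNat := if_neg (by omega)
            rw [h3]
            congr 1
            omega
          rw [h1, h2, ← hq0]
          exact (hqstep 0).imp id And.left
        · have h1 : p k = q (k - (N : ℤ)).toNat := if_neg (by omega)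
          have h2 : p (k + 1) = q ((k - (N : ℤ)).toNat + 1) := by
            have h3 : p (k + 1) = q (k + 1 - (N : ℤ)).toNat := if_neg (by omega)
            rw [h3]
            congr 1
            omega
          rw [h1, h2]
          exact (hqstep _).imp id And.left
      refine Or.inr ⟨⟨p, hstep, ?_, ?_⟩, ?_⟩
      · have heq : ∀ n : ℕ, ((γ.p (-(n : ℤ)) : V) : UniformSpace.Completion V) =
            ((p (-(n : ℤ)) : V) : UniformSpace.Completion V) := by
          intro n
          congr 1
          exact (if_pos (by omega)).symm
        exact γ.tendsto_left.congr heq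
      · have hcomp : Tendsto (fun n : ℕ => ((q (n - N) : V) : UniformSpace.Completion V))
            atTop (nhds z) := by
          refine hqt.comp ?_
          exact Filter.tendsto_atTop_atTop.mpr fun b => ⟨b + N, fun n hn => by omega⟩
        refine hcomp.congr' ?_
        filter_upwards [Filter.eventually_ge_atTop N] with n hn
        congr 1
        rcases Nat.eq_or_lt_of_le hn with rfl | hn'
        · have h1 : p ((N : ℤ)) = γ.p ((N : ℤ)) := if_pos le_rfl
          rw [h1, Nat.sub_self, hq0]
        · have h1 : p (n : ℤ) = q ((n : ℤ) - (N : ℤ)).toNat := if_neg (by omega)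
          rw [h1]
          congr 1
          omega
      · have hnouse : ∀ e ∈ W, ∀ k : ℤ, p k = p (k + 1) ∨ e ≠ s(p k, p (k + 1)) := by
          intro e he k
          rcases lt_trichotomy k (N : ℤ) with hk | hk | hk
          · have h1 : p k = γ.p k := if_pos (by omega)
            have h2 : p (k + 1) = γ.p (k + 1) := if_pos (by omega)
            rw [h1, h2]
            by_cases hne2 : γ.p k = γ.p (k + 1)
            · exact Or.inl hne2
            · exact Or.inr fun heq2 => hγ e he ⟨k, hne2, heq2⟩
          · subst hk
            have h1 : p (N : ℤ) = q 0 := by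
              have h0 : p (N : ℤ) = γ.p (N : ℤ) := if_pos le_rfl
              rw [h0, hq0]
            have h2 : p ((N : ℤ) + 1) = q 1 := by
              have h3 : p ((N : ℤ) + 1) = q ((N : ℤ) + 1 - (N : ℤ)).toNat := if_neg (by omega)
              rw [h3]
              congr 1
              omega
            rw [h1, h2]
            rcases hqstep 0 with h | ⟨_, hnW⟩
            · exact Or.inl h
            · exact Or.inr fun heq2 => hnW (heq2 ▸ he)
          · have h1 : p k = q (k - (N : ℤ)).toNat := if_neg (by omega)
            have h2 : p (k + 1) = q ((k - (N : ℤ)).toNat + 1) := by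
              have h3 : p (k + 1) = q (k + 1 - (N : ℤ)).toNat := if_neg (by omega)
              rw [h3]
              congr 1
              omega
            rw [h1, h2]
            rcases hqstep (k - (N : ℤ)).toNat with h | ⟨_, hnW⟩
            · exact Or.inl h
            · exact Or.inr fun heq2 => hnW (heq2 ▸ he)
        rintro e he ⟨k, hne', heq⟩
        rcases hnouse e he k with h | h
        · exact hne' h
        · exact h heq
  constructor
  · -- closed
    apply isClosed_of_closure_subset
    intro z hz
    obtain ⟨y, hyU, hzy⟩ := Metric.mem_closure_iff.mp hz r hr0
    exact key y hyU z (by rwa [dist_comm] at hzy)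
  · -- open
    rw [Metric.isOpen_iff]
    intro y hy
    refine ⟨r, hr0, fun z hz => ?_⟩
    exact key y hy z (by rwa [Metric.mem_ball, dist_comm] at hz)
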